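/- E is the unique unital ℂ-algebra homomorphism from (S̃_{-1}, +, ⊗) to ℂ: if φ: S̃_{-1} → ℂ is multiplicative for the Wick product, additive, ℂ-linear, and φ(1) = 1, then φ(f) = E[f] for all f. -/

import Mathlib

/-- Weight `(2ℕ)^α = ∏_k (2 i_k)` of a word (letter `i` represents `z_{i+1}`). -/
noncomputable def ncWeight (α : FreeMonoid ℕ) : ℝ :=
  (FreeMonoid.toList α |>.map (fun i => (2 * (i + 1) : ℝ))).prod

/-- Wick product: monoid convolution `(f ⊗ g)_γ = ∑_{αβ = γ} f_α g_β`. -/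
noncomputable def wick (f g : FreeMonoid ℕ → ℂ) (γ : FreeMonoid ℕ) : ℂ :=
  ∑ j ∈ Finset.range ((FreeMonoid.toList γ).length + 1),
    f (FreeMonoid.ofList ((FreeMonoid.toList γ).take j)) *
      g (FreeMonoid.ofList ((FreeMonoid.toList γ).drop j))

/-- The unit for the Wick product: the indicator of the empty word. -/
noncomputable def wickUnit : FreeMonoid ℕ → ℂ :=
  fun γ => if FreeMonoid.toList γ = [] then 1 else 0

/-- Membership in the non-commutative Kondratiev space
`S̃₋₁ = ⋃_p L²(ℓ̃, μ_{-p})`. -/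
def memS (f : FreeMonoid ℕ → ℂ) : Prop :=
  ∃ p : ℕ, Summable (fun α => ‖f α‖ ^ 2 * ncWeight α ^ (-(p : ℤ)))

namespace EUH

/-! ### The weight on lists -/

noncomputable def W (l : List ℕ) : ℝ := ncWeight (FreeMonoid.ofList l)

lemma ncWeight_eq (α : FreeMonoid ℕ) : ncWeight α = W (FreeMonoid.toList α) := by
  simp [W]

lemma W_nil : W [] = 1 := by simp [W, ncWeight]

lemma W_cons (a : ℕ) (l : List ℕ) : W (a :: l) = (2 * ((a : ℝ) + 1)) * W l := by
  simp [W, ncWeight]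

lemma one_le_W (l : List ℕ) : 1 ≤ W l := by
  induction l with
  | nil => simp [W_nil]
  | cons a l ih =>
    rw [W_cons]
    have ha : (0:ℝ) ≤ (a : ℝ) := Nat.cast_nonneg a
    nlinarith

lemma W_pos (l : List ℕ) : 0 < W l := lt_of_lt_of_le one_pos (one_le_W l)

lemma one_le_ncWeight (α : FreeMonoid ℕ) : 1 ≤ ncWeight α := by
  rw [ncWeight_eq]; exact one_le_W _

lemma ncWeight_pos (α : FreeMonoid ℕ) : 0 < ncWeight α :=
  lt_of_lt_of_le one_pos (one_le_ncWeight α)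

lemma W_append (a b : List ℕ) : W (a ++ b) = W a * W b := by
  induction a with
  | nil => simp [W_nil]
  | cons x a ih => simp [W_cons, ih]; ring

/-- The letter weights `(2(i+1))^{-t}`. -/
noncomputable def R (t : ℕ) (i : ℕ) : ℝ := ((2 * ((i : ℝ) + 1)) ^ t)⁻¹

lemma R_nonneg (t i : ℕ) : 0 ≤ R t i := by
  unfold R; positivity

lemma W_pow_inv (t : ℕ) (l : List ℕ) :
    ((W l) ^ t)⁻¹ = (l.map (R t)).prod := by
  induction l with
  | nil => simp [W_nil]
  | cons a l ih => simp [W_cons, mul_pow, mul_inv, ih, R]; ring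

/-! ### The Wick inverse on lists -/

/-- Wick inverse, defined by recursion on word length. -/
noncomputable def wInv (g : List ℕ → ℂ) (γ : List ℕ) : ℂ :=
  if γ = [] then 1
  else ∑ j ∈ (Finset.range γ.length).attach,
        g (γ.take (j.1 + 1)) * wInv g (γ.drop (j.1 + 1))
termination_by γ.length
decreasing_by
  have hj := j.2
  simp only [Finset.mem_range] at hj
  simp only [List.length_drop]
  omega

lemma wInv_nil (g : List ℕ → ℂ) : wInv g [] = 1 := by simp [wInv]

lemma wInv_ne (g : List ℕ → ℂ) (γ : List ℕ) (h : γ ≠ []) :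
    wInv g γ = ∑ j ∈ Finset.range γ.length,
      g (γ.take (j + 1)) * wInv g (γ.drop (j + 1)) := by
  rw [wInv]
  simp only [h, if_false]
  exact Finset.sum_attach (Finset.range γ.length)
    (fun j => g (γ.take (j + 1)) * wInv g (γ.drop (j + 1)))

/-! ### Finite-sum estimates -/

lemma list_prod_nonneg {r : ℕ → ℝ} (hr : ∀ i, 0 ≤ r i) (l : List ℕ) :
    0 ≤ (l.map r).prod := by
  induction l with
  | nil => simp
  | cons a l ih => simp only [List.map_cons, List.prod_cons]; exact mul_nonneg (hr a) ih

/-- Geometric bound for finite sums of word-products over nonempty words. -/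
lemma L1 (r : ℕ → ℝ) (hr : ∀ i, 0 ≤ r i) (c : ℝ) (hc : c ≤ 1/2)
    (hsum : ∀ I : Finset ℕ, ∑ i ∈ I, r i ≤ c) :
    ∀ n (S : Finset (List ℕ)), (∀ l ∈ S, l.length ≤ n) → (∀ l ∈ S, l ≠ []) →
      ∑ l ∈ S, (l.map r).prod ≤ 2 * c := by
  have hc0 : 0 ≤ c := by simpa using hsum ∅
  intro n
  induction n with
  | zero =>
    intro S hlen hne
    have : S = ∅ := by
      apply Finset.eq_empty_of_forall_notMem
      intro l hl
      exact hne l hl (List.eq_nil_of_length_eq_zero (Nat.le_zero.mp (hlen l hl)))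
    simp [this]; positivity
  | succ n ih =>
    intro S hlen hne
    have key : ∀ l ∈ S, (l.map r).prod = r l.headI * ((l.tail).map r).prod := by
      intro l hl
      obtain ⟨a, t, rfl⟩ := List.exists_cons_of_ne_nil (hne l hl)
      simp
    rw [Finset.sum_congr rfl key]
    have hinj : ∀ x ∈ S, ∀ y ∈ S, (fun l : List ℕ => (l.headI, l.tail)) x =
        (fun l : List ℕ => (l.headI, l.tail)) y → x = y := by
      intro x hx y hy hxy
      obtain ⟨a, s, rfl⟩ := List.exists_cons_of_ne_nil (hne x hx)
      obtain ⟨b, t, rfl⟩ := List.exists_cons_of_ne_nil (hne y hy)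
      simp only [List.headI_cons, List.tail_cons, Prod.mk.injEq] at hxy
      rw [hxy.1, hxy.2]
    have himg : ∑ l ∈ S, r l.headI * ((l.tail).map r).prod
        = ∑ y ∈ S.image (fun l : List ℕ => (l.headI, l.tail)),
            r y.1 * ((y.2).map r).prod := by
      rw [Finset.sum_image hinj]
    rw [himg]
    set T := S.image (fun l : List ℕ => (l.headI, l.tail)) with hT
    set A := T.image Prod.fst with hA
    set B := T.image Prod.snd with hB
    have hsub : T ⊆ A ×ˢ B := by
      intro y hy
      rw [Finset.mem_product]
      exact ⟨Finset.mem_image_of_mem _ hy, Finset.mem_image_of_mem _ hy⟩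
    have hBn : ∀ t ∈ B, t.length ≤ n := by
      intro t ht
      rw [hB] at ht
      obtain ⟨y, hy, rfl⟩ := Finset.mem_image.mp ht
      rw [hT] at hy
      obtain ⟨l, hl, rfl⟩ := Finset.mem_image.mp hy
      have := hlen l hl
      simp only [List.length_tail]
      omega
    have step1 : ∑ y ∈ T, r y.1 * ((y.2).map r).prod
        ≤ ∑ y ∈ A ×ˢ B, r y.1 * ((y.2).map r).prod := by
      apply Finset.sum_le_sum_of_subset_of_nonneg hsub
      intro y _ _
      exact mul_nonneg (hr _) (list_prod_nonneg hr _)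
    have hBsum : ∑ t ∈ B, ((t).map r).prod ≤ 2 := by
      rw [← Finset.sum_filter_add_sum_filter_not B (fun t => t = [])]
      have h1 : ∑ t ∈ B.filter (fun t => t = []), ((t).map r).prod ≤ 1 := by
        have hsub1 : B.filter (fun t => t = []) ⊆ {[]} := by
          intro t ht
          simp only [Finset.mem_filter] at ht
          simp [ht.2]
        calc ∑ t ∈ B.filter (fun t => t = []), ((t).map r).prod
            ≤ ∑ t ∈ ({[]} : Finset (List ℕ)), ((t).map r).prod :=
              Finset.sum_le_sum_of_subset_of_nonneg hsub1
                (fun t _ _ => list_prod_nonneg hr t)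
          _ = 1 := by simp
      have h2 : ∑ t ∈ B.filter (fun t => ¬ t = []), ((t).map r).prod ≤ 2 * c := by
        apply ih
        · intro l hl
          exact hBn l (Finset.filter_subset _ _ hl)
        · intro l hl
          exact (Finset.mem_filter.mp hl).2
      linarith
    calc ∑ y ∈ T, r y.1 * ((y.2).map r).prod
        ≤ ∑ y ∈ A ×ˢ B, r y.1 * ((y.2).map r).prod := step1
      _ = ∑ a ∈ A, ∑ t ∈ B, r a * ((t).map r).prod := by rw [Finset.sum_product]
      _ = ∑ a ∈ A, r a * ∑ t ∈ B, ((t).map r).prod := by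
          apply Finset.sum_congr rfl; intro a _; rw [Finset.mul_sum]
      _ ≤ ∑ a ∈ A, r a * 2 := by
          apply Finset.sum_le_sum; intro a _
          exact mul_le_mul_of_nonneg_left hBsum (hr a)
      _ = 2 * ∑ a ∈ A, r a := by rw [← Finset.sum_mul]; ring
      _ ≤ 2 * c := by linarith [hsum A]

/-- Main bound: partial sums of the weighted inverse coefficients are bounded. -/
lemma L2 (b cf : List ℕ → ℝ) (hb : ∀ l, 0 ≤ b l) (hcf : ∀ l, 0 ≤ cf l)
    (hc0 : cf [] ≤ 1)
    (hrec : ∀ γ : List ℕ, γ ≠ [] → cf γ ≤ ∑ j ∈ Finset.range γ.length,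
        b (γ.take (j + 1)) * cf (γ.drop (j + 1)))
    (hbsum : ∀ S : Finset (List ℕ), (∀ l ∈ S, l ≠ []) → ∑ l ∈ S, b l ≤ 1/2) :
    ∀ n (F : Finset (List ℕ)), (∀ l ∈ F, l.length ≤ n) → ∑ l ∈ F, cf l ≤ 2 := by
  intro n
  induction n with
  | zero =>
    intro F hlen
    have hsub : F ⊆ {[]} := by
      intro l hl
      simp [List.eq_nil_of_length_eq_zero (Nat.le_zero.mp (hlen l hl))]
    calc ∑ l ∈ F, cf l ≤ ∑ l ∈ ({[]} : Finset (List ℕ)), cf l :=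
          Finset.sum_le_sum_of_subset_of_nonneg hsub (fun l _ _ => hcf l)
      _ = cf [] := by simp
      _ ≤ 2 := by linarith
  | succ n ih =>
    intro F hlen
    rw [← Finset.sum_filter_add_sum_filter_not F (fun l => l = [])]
    have h1 : ∑ l ∈ F.filter (fun l => l = []), cf l ≤ 1 := by
      have hsub1 : F.filter (fun l => l = []) ⊆ {[]} := by
        intro l hl
        simp only [Finset.mem_filter] at hl
        simp [hl.2]
      calc ∑ l ∈ F.filter (fun l => l = []), cf l
          ≤ ∑ l ∈ ({[]} : Finset (List ℕ)), cf l :=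
            Finset.sum_le_sum_of_subset_of_nonneg hsub1 (fun l _ _ => hcf l)
        _ = cf [] := by simp
        _ ≤ 1 := hc0
    have h2 : ∑ l ∈ F.filter (fun l => ¬ l = []), cf l ≤ 1 := by
      set F' := F.filter (fun l => ¬ l = []) with hF'
      have hne : ∀ l ∈ F', l ≠ [] := fun l hl => (Finset.mem_filter.mp hl).2
      have hlen' : ∀ l ∈ F', l.length ≤ n + 1 :=
        fun l hl => hlen l (Finset.filter_subset _ _ hl)
      have step1 : ∑ l ∈ F', cf l ≤
          ∑ l ∈ F', ∑ j ∈ Finset.range l.length,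
            b (l.take (j + 1)) * cf (l.drop (j + 1)) :=
        Finset.sum_le_sum (fun l hl => hrec l (hne l hl))
      set D := F'.sigma (fun γ : List ℕ => Finset.range γ.length) with hD
      have step2 : ∑ l ∈ F', ∑ j ∈ Finset.range l.length,
          b (l.take (j + 1)) * cf (l.drop (j + 1))
          = ∑ x ∈ D, b (x.1.take (x.2 + 1)) * cf (x.1.drop (x.2 + 1)) := by
        rw [hD, Finset.sum_sigma]
      set e : (Σ _ : List ℕ, ℕ) → List ℕ × List ℕ :=
        fun x => (x.1.take (x.2 + 1), x.1.drop (x.2 + 1)) with he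
      have hinj : ∀ x ∈ D, ∀ y ∈ D, e x = e y → x = y := by
        intro x hx y hy hxy
        simp only [hD, Finset.mem_sigma, Finset.mem_range] at hx hy
        simp only [he, Prod.mk.injEq] at hxy
        have h1x : x.1 = y.1 := by
          rw [← List.take_append_drop (x.2 + 1) x.1, ← List.take_append_drop (y.2 + 1) y.1,
            hxy.1, hxy.2]
        have h2x : x.2 = y.2 := by
          have e1 : (x.1.take (x.2 + 1)).length = x.2 + 1 := by
            rw [List.length_take]; omega
          have e2 : (y.1.take (y.2 + 1)).length = y.2 + 1 := by
            rw [List.length_take]; omega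
          rw [hxy.1] at e1
          rw [e2] at e1
          omega
        exact Sigma.ext h1x (heq_of_eq h2x)
      have step3 : ∑ x ∈ D, b (x.1.take (x.2 + 1)) * cf (x.1.drop (x.2 + 1))
          = ∑ y ∈ D.image e, b y.1 * cf y.2 := by
        rw [Finset.sum_image hinj]
      set A := (D.image e).image Prod.fst with hA
      set B := (D.image e).image Prod.snd with hB
      have hsub : D.image e ⊆ A ×ˢ B := by
        intro y hy
        rw [Finset.mem_product]
        exact ⟨Finset.mem_image_of_mem _ hy, Finset.mem_image_of_mem _ hy⟩
      have hAne : ∀ a ∈ A, a ≠ [] := by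
        intro a ha
        rw [hA] at ha
        obtain ⟨y, hy, rfl⟩ := Finset.mem_image.mp ha
        obtain ⟨x, hx, rfl⟩ := Finset.mem_image.mp hy
        simp only [hD, Finset.mem_sigma, Finset.mem_range] at hx
        simp only [he]
        intro hcontra
        have hlen0 := congrArg List.length hcontra
        rw [List.length_take] at hlen0
        simp only [List.length_nil] at hlen0
        omega
      have hBlen : ∀ t ∈ B, t.length ≤ n := by
        intro t ht
        rw [hB] at ht
        obtain ⟨y, hy, rfl⟩ := Finset.mem_image.mp ht
        obtain ⟨x, hx, rfl⟩ := Finset.mem_image.mp hy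
        simp only [hD, Finset.mem_sigma, Finset.mem_range] at hx
        have := hlen' x.1 hx.1
        simp only [he, List.length_drop]
        omega
      calc ∑ l ∈ F', cf l
          ≤ ∑ x ∈ D, b (x.1.take (x.2 + 1)) * cf (x.1.drop (x.2 + 1)) := by
            rw [← step2]; exact step1
        _ = ∑ y ∈ D.image e, b y.1 * cf y.2 := step3
        _ ≤ ∑ y ∈ A ×ˢ B, b y.1 * cf y.2 :=
            Finset.sum_le_sum_of_subset_of_nonneg hsub
              (fun y _ _ => mul_nonneg (hb _) (hcf _))
        _ = ∑ a ∈ A, ∑ t ∈ B, b a * cf t := by rw [Finset.sum_product]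
        _ = (∑ a ∈ A, b a) * ∑ t ∈ B, cf t := by
            rw [Finset.sum_mul]
            exact Finset.sum_congr rfl (fun a _ => by rw [Finset.mul_sum])
        _ ≤ (1/2) * 2 := by
            apply mul_le_mul (hbsum A hAne) (ih B hBlen)
              (Finset.sum_nonneg (fun t _ => hcf t))
              (by norm_num)
        _ = 1 := by norm_num
    linarith

lemma rsum_le (t : ℕ) (ht : 2 ≤ t) (I : Finset ℕ) :
    ∑ i ∈ I, R t i ≤ 2 * ((2:ℝ) ^ t)⁻¹ := by
  have hterm : ∀ i : ℕ, R t i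
      ≤ ((2:ℝ)^t)⁻¹ * (2 * (((i:ℝ) + 1)⁻¹ - ((i:ℝ) + 2)⁻¹)) := by
    intro i
    unfold R
    set x : ℝ := (i : ℝ) with hx
    have hx0 : 0 ≤ x := Nat.cast_nonneg i
    have h1 : (0:ℝ) < x + 1 := by linarith
    have h2 : (0:ℝ) < x + 2 := by linarith
    have key : (x+1)⁻¹ - (x+2)⁻¹ = ((x+1)*(x+2))⁻¹ := by
      field_simp
      norm_num
    have hpow : ((x+1) ^ t)⁻¹ ≤ ((x+1) ^ 2)⁻¹ := by
      apply inv_anti₀ (by positivity)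
      exact pow_le_pow_right₀ (by linarith) ht
    have hsq : ((x+1) ^ 2)⁻¹ ≤ 2 * ((x+1)*(x+2))⁻¹ := by
      have hd : 2 * ((x+1)*(x+2))⁻¹ - ((x+1)^2)⁻¹ = x / ((x+1)^2*(x+2)) := by
        field_simp
        ring
      have hnn : 0 ≤ x / ((x+1)^2*(x+2)) := by positivity
      linarith
    calc ((2 * (x + 1)) ^ t)⁻¹ = ((2:ℝ)^t)⁻¹ * ((x+1)^t)⁻¹ := by
          rw [mul_pow, mul_inv]
      _ ≤ ((2:ℝ)^t)⁻¹ * ((x+1)^2)⁻¹ := by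
          apply mul_le_mul_of_nonneg_left hpow (by positivity)
      _ ≤ ((2:ℝ)^t)⁻¹ * (2 * ((x+1)*(x+2))⁻¹) := by
          apply mul_le_mul_of_nonneg_left hsq (by positivity)
      _ = ((2:ℝ)^t)⁻¹ * (2 * ((x+1)⁻¹ - (x+2)⁻¹)) := by rw [key]
  have htel : ∑ i ∈ I, (((i:ℝ) + 1)⁻¹ - ((i:ℝ) + 2)⁻¹) ≤ 1 := by
    obtain ⟨N, hN⟩ := Finset.exists_nat_subset_range I
    have hterm0 : ∀ i : ℕ, 0 ≤ (((i:ℝ) + 1)⁻¹ - ((i:ℝ) + 2)⁻¹) := by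
      intro i
      have h1 : (0:ℝ) < (i:ℝ) + 1 := by positivity
      have h2 : (0:ℝ) < (i:ℝ) + 2 := by positivity
      have := inv_anti₀ h1 (by linarith : (i:ℝ) + 1 ≤ (i:ℝ) + 2)
      linarith
    calc ∑ i ∈ I, (((i:ℝ) + 1)⁻¹ - ((i:ℝ) + 2)⁻¹)
        ≤ ∑ i ∈ Finset.range N, (((i:ℝ) + 1)⁻¹ - ((i:ℝ) + 2)⁻¹) :=
          Finset.sum_le_sum_of_subset_of_nonneg hN (fun i _ _ => hterm0 i)
      _ = (fun n : ℕ => ((n:ℝ) + 1)⁻¹) 0 - (fun n : ℕ => ((n:ℝ) + 1)⁻¹) N := by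
          rw [← Finset.sum_range_sub' (fun n : ℕ => ((n:ℝ) + 1)⁻¹) N]
          exact Finset.sum_congr rfl (fun i _ => by push_cast; ring)
      _ ≤ 1 := by
          have : (0:ℝ) ≤ ((N:ℝ) + 1)⁻¹ := by positivity
          simp only []
          norm_num
          linarith
  calc ∑ i ∈ I, R t i
      ≤ ∑ i ∈ I, ((2:ℝ)^t)⁻¹ * (2 * (((i:ℝ) + 1)⁻¹ - ((i:ℝ) + 2)⁻¹)) :=
        Finset.sum_le_sum (fun i _ => hterm i)
    _ = ((2:ℝ)^t)⁻¹ * 2 * ∑ i ∈ I, (((i:ℝ) + 1)⁻¹ - ((i:ℝ) + 2)⁻¹) := by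
        rw [Finset.mul_sum]
        exact Finset.sum_congr rfl (fun i _ => by ring)
    _ ≤ ((2:ℝ)^t)⁻¹ * 2 * 1 := by
        apply mul_le_mul_of_nonneg_left htel (by positivity)
    _ = 2 * ((2:ℝ) ^ t)⁻¹ := by ring

/-! ### `memS` lemmas -/

lemma memS_unit : memS wickUnit := by
  refine ⟨0, ?_⟩
  apply summable_of_ne_finset_zero (s := {(1 : FreeMonoid ℕ)})
  intro α hα
  have : FreeMonoid.toList α ≠ [] := by
    intro h
    apply hα
    simp only [Finset.mem_singleton]
    have := congrArg FreeMonoid.ofList h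
    simpa using this
  simp [wickUnit, this]

lemma memS_smul (c : ℂ) (f : FreeMonoid ℕ → ℂ) (hf : memS f) :
    memS (fun γ => c * f γ) := by
  obtain ⟨p, hp⟩ := hf
  refine ⟨p, ?_⟩
  have := hp.mul_left (‖c‖ ^ 2)
  refine this.congr fun α => ?_
  simp [norm_mul, mul_pow]
  ring

lemma memS_add (f g : FreeMonoid ℕ → ℂ) (hf : memS f) (hg : memS g) :
    memS (fun γ => f γ + g γ) := by
  obtain ⟨p, hp⟩ := hf
  obtain ⟨q, hq⟩ := hg
  refine ⟨max p q, ?_⟩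
  refine Summable.of_nonneg_of_le ?_ ?_ ((hp.mul_left 2).add (hq.mul_left 2))
  · intro α
    have := (ncWeight_pos α)
    positivity
  · intro α
    have hW := one_le_ncWeight α
    have h1 : ncWeight α ^ (-((max p q : ℕ) : ℤ)) ≤ ncWeight α ^ (-(p : ℤ)) := by
      apply zpow_le_zpow_right₀ hW
      simp
    have h2 : ncWeight α ^ (-((max p q : ℕ) : ℤ)) ≤ ncWeight α ^ (-(q : ℤ)) := by
      apply zpow_le_zpow_right₀ hW
      simp
    have hn : ‖f α + g α‖ ^ 2 ≤ 2 * ‖f α‖ ^ 2 + 2 * ‖g α‖ ^ 2 := by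
      have h := norm_add_le (f α) (g α)
      have hsq : ‖f α + g α‖ ^ 2 ≤ (‖f α‖ + ‖g α‖) ^ 2 :=
        pow_le_pow_left₀ (norm_nonneg _) h 2
      nlinarith [sq_nonneg (‖f α‖ - ‖g α‖)]
    have hWpos : (0:ℝ) < ncWeight α ^ (-((max p q : ℕ) : ℤ)) :=
      zpow_pos (ncWeight_pos α) _
    calc ‖f α + g α‖ ^ 2 * ncWeight α ^ (-((max p q : ℕ) : ℤ))
        ≤ (2 * ‖f α‖ ^ 2 + 2 * ‖g α‖ ^ 2) * ncWeight α ^ (-((max p q : ℕ) : ℤ)) := by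
          exact mul_le_mul_of_nonneg_right hn hWpos.le
      _ = 2 * (‖f α‖ ^ 2 * ncWeight α ^ (-((max p q : ℕ) : ℤ)))
          + 2 * (‖g α‖ ^ 2 * ncWeight α ^ (-((max p q : ℕ) : ℤ))) := by ring
      _ ≤ 2 * (‖f α‖ ^ 2 * ncWeight α ^ (-(p : ℤ)))
          + 2 * (‖g α‖ ^ 2 * ncWeight α ^ (-(q : ℤ))) := by
          have t1 := mul_le_mul_of_nonneg_left h1 (sq_nonneg ‖f α‖)
          have t2 := mul_le_mul_of_nonneg_left h2 (sq_nonneg ‖g α‖)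
          linarith

/-! ### Existence of Wick inverses -/

lemma exists_inverse (k : FreeMonoid ℕ → ℂ) (hk : memS k) (hk0 : k 1 ≠ 0) :
    ∃ h : FreeMonoid ℕ → ℂ, memS h ∧ wick k h = wickUnit := by
  classical
  set K : List ℕ → ℂ := fun l => k (FreeMonoid.ofList l) with hKdef
  have hd0 : K [] ≠ 0 := by
    simpa [hKdef] using hk0
  set d : ℂ := K [] with hd
  set g : List ℕ → ℂ := fun l => if l = [] then 0 else -(K l) / d with hg
  refine ⟨fun γ => d⁻¹ * wInv g (FreeMonoid.toList γ), ?_, ?_⟩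
  · -- membership in S̃₋₁
    obtain ⟨p, hp⟩ := hk
    have hpl : Summable (fun l : List ℕ => ‖K l‖ ^ 2 * ((W l) ^ p)⁻¹) := by
      have h1 := (Equiv.summable_iff
        (FreeMonoid.ofList : List ℕ ≃ FreeMonoid ℕ)).mpr hp
      apply h1.congr
      intro l
      simp only [Function.comp_apply, W]
      rw [zpow_neg, zpow_natCast]
    set M : ℝ := ∑' l : List ℕ, ‖K l‖ ^ 2 * ((W l) ^ p)⁻¹ with hMdef
    have hM : ∀ l, ‖K l‖ ^ 2 * ((W l) ^ p)⁻¹ ≤ M := by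
      intro l
      apply Summable.le_tsum hpl l
      intro l' _
      have := W_pos l'
      positivity
    set C : ℝ := max M 1 with hC
    have hC1 : (1:ℝ) ≤ C := le_max_right _ _
    have hMC : M ≤ C := le_max_left _ _
    have hKb : ∀ l, ‖K l‖ ≤ C * (W l) ^ p := by
      intro l
      have hWp : (0:ℝ) < (W l) ^ p := pow_pos (W_pos l) p
      have hWp1 : (1:ℝ) ≤ (W l) ^ p := by
        calc (1:ℝ) = 1 ^ p := (one_pow p).symm
          _ ≤ (W l) ^ p := pow_le_pow_left₀ (by norm_num) (one_le_W l) p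
      have h2 : ‖K l‖ ^ 2 ≤ M * (W l) ^ p := by
        calc ‖K l‖ ^ 2 = ‖K l‖ ^ 2 * ((W l) ^ p)⁻¹ * (W l) ^ p := by
              field_simp
          _ ≤ M * (W l) ^ p := mul_le_mul_of_nonneg_right (hM l) hWp.le
      have hCW1 : (1:ℝ) ≤ C * (W l) ^ p := by nlinarith
      have h5 : M * (W l) ^ p ≤ C * (W l) ^ p :=
        mul_le_mul_of_nonneg_right hMC hWp.le
      have h3 : M * (W l) ^ p ≤ (C * (W l) ^ p) ^ 2 := by nlinarith
      have h4 : ‖K l‖ ^ 2 ≤ (C * (W l) ^ p) ^ 2 := le_trans h2 h3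
      have hCW : (0:ℝ) ≤ C * (W l) ^ p := by positivity
      nlinarith [norm_nonneg (K l)]
    set C₂ : ℝ := C * ‖d‖⁻¹ with hC₂
    have hC₂0 : 0 ≤ C₂ := by positivity
    have hgb : ∀ l : List ℕ, l ≠ [] → ‖g l‖ ≤ C₂ * (W l) ^ p := by
      intro l hl
      simp only [hg, if_neg hl]
      rw [norm_div, norm_neg]
      calc ‖K l‖ / ‖d‖ = ‖K l‖ * ‖d‖⁻¹ := by rw [div_eq_mul_inv]
        _ ≤ (C * (W l) ^ p) * ‖d‖⁻¹ :=
            mul_le_mul_of_nonneg_right (hKb l) (by positivity)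
        _ = C₂ * (W l) ^ p := by rw [hC₂]; ring
    obtain ⟨m, hm⟩ := exists_nat_ge (8 * C₂)
    set t : ℕ := m + 2 with htdef
    have ht2 : 2 ≤ t := by omega
    have h2tp : (0:ℝ) < 2 ^ t := by positivity
    have h2t : 8 * C₂ ≤ 2 ^ t := by
      calc 8 * C₂ ≤ (m:ℝ) := hm
        _ ≤ 2 ^ m := by exact_mod_cast (Nat.lt_two_pow_self (n := m)).le
        _ ≤ 2 ^ t := by
            apply pow_le_pow_right₀ one_le_two
            omega
    set q : ℕ := p + t with hq
    set b : List ℕ → ℝ := fun l => ‖g l‖ * ((W l) ^ q)⁻¹ with hb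
    set cf : List ℕ → ℝ := fun l => ‖wInv g l‖ * ((W l) ^ q)⁻¹ with hcf
    have hbsum : ∀ S : Finset (List ℕ), (∀ l ∈ S, l ≠ []) → ∑ l ∈ S, b l ≤ 1/2 := by
      intro S hS
      have hle : ∀ l ∈ S, b l ≤ C₂ * ((l.map (R t)).prod) := by
        intro l hl
        have hWt : ((W l) ^ q)⁻¹ = ((W l) ^ p)⁻¹ * ((W l) ^ t)⁻¹ := by
          rw [hq, pow_add, mul_inv]
        calc b l = ‖g l‖ * ((W l) ^ q)⁻¹ := rfl
          _ ≤ (C₂ * (W l) ^ p) * ((W l) ^ q)⁻¹ :=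
              mul_le_mul_of_nonneg_right (hgb l (hS l hl))
                (by have := W_pos l; positivity)
          _ = C₂ * ((W l) ^ t)⁻¹ := by
              rw [hWt]
              have hcc : (W l) ^ p * ((W l) ^ p)⁻¹ = 1 :=
                mul_inv_cancel₀ (pow_pos (W_pos l) p).ne'
              calc (C₂ * (W l) ^ p) * (((W l) ^ p)⁻¹ * ((W l) ^ t)⁻¹)
                  = C₂ * ((W l) ^ p * ((W l) ^ p)⁻¹) * ((W l) ^ t)⁻¹ := by ring
                _ = C₂ * ((W l) ^ t)⁻¹ := by rw [hcc]; ring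
          _ = C₂ * ((l.map (R t)).prod) := by
              rw [← W_pow_inv]
      have hL1 : ∑ l ∈ S, ((l.map (R t)).prod)
          ≤ 2 * (2 * ((2:ℝ) ^ t)⁻¹) := by
        apply L1 (R t) (R_nonneg t)
          (2 * ((2:ℝ) ^ t)⁻¹) ?_ (rsum_le t ht2) (S.sup List.length) S
          (fun l hl => Finset.le_sup hl) hS
        · -- 2 * (2^t)⁻¹ ≤ 1/2
          have h4 : (4:ℝ) ≤ 2 ^ t := by
            calc (4:ℝ) = 2 ^ 2 := by norm_num
              _ ≤ 2 ^ t := pow_le_pow_right₀ one_le_two ht2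
          rw [div_eq_mul_inv]
          have hinv : ((2:ℝ) ^ t)⁻¹ ≤ 4⁻¹ := by
            apply inv_anti₀ (by norm_num) h4
          calc 2 * ((2:ℝ) ^ t)⁻¹ ≤ 2 * (4:ℝ)⁻¹ := by linarith
            _ = 1 * 2⁻¹ := by norm_num
      calc ∑ l ∈ S, b l
          ≤ ∑ l ∈ S, C₂ * ((l.map (R t)).prod) :=
            Finset.sum_le_sum hle
        _ = C₂ * ∑ l ∈ S, ((l.map (R t)).prod) := by
            rw [Finset.mul_sum]
        _ ≤ C₂ * (2 * (2 * ((2:ℝ) ^ t)⁻¹)) := mul_le_mul_of_nonneg_left hL1 hC₂0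
        _ ≤ 1/2 := by
            have hinv : ((2:ℝ) ^ t)⁻¹ * (2 ^ t) = 1 := inv_mul_cancel₀ h2tp.ne'
            have hinv0 : (0:ℝ) ≤ ((2:ℝ) ^ t)⁻¹ := by positivity
            nlinarith
    have hrec : ∀ γ : List ℕ, γ ≠ [] → cf γ ≤ ∑ j ∈ Finset.range γ.length,
        b (γ.take (j + 1)) * cf (γ.drop (j + 1)) := by
      intro γ hγ
      have hnorm : ‖wInv g γ‖ ≤ ∑ j ∈ Finset.range γ.length,
          ‖g (γ.take (j + 1))‖ * ‖wInv g (γ.drop (j + 1))‖ := by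
        rw [wInv_ne g γ hγ]
        refine (norm_sum_le _ _).trans ?_
        apply Finset.sum_le_sum
        intro j _
        rw [norm_mul]
      have hWq : ∀ j : ℕ, ((W γ) ^ q)⁻¹
          = ((W (γ.take (j + 1))) ^ q)⁻¹ * ((W (γ.drop (j + 1))) ^ q)⁻¹ := by
        intro j
        conv_lhs => rw [← List.take_append_drop (j + 1) γ]
        rw [W_append, mul_pow, mul_inv]
      calc cf γ = ‖wInv g γ‖ * ((W γ) ^ q)⁻¹ := rfl
        _ ≤ (∑ j ∈ Finset.range γ.length,
              ‖g (γ.take (j + 1))‖ * ‖wInv g (γ.drop (j + 1))‖) * ((W γ) ^ q)⁻¹ := by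
            apply mul_le_mul_of_nonneg_right hnorm
            have := W_pos γ
            positivity
        _ = ∑ j ∈ Finset.range γ.length, b (γ.take (j + 1)) * cf (γ.drop (j + 1)) := by
            rw [Finset.sum_mul]
            apply Finset.sum_congr rfl
            intro j _
            rw [hWq j]
            simp only [hb, hcf]
            ring
    have hc0 : cf [] ≤ 1 := by
      simp [hcf, wInv_nil, W_nil]
    have hF : ∀ F : Finset (List ℕ), ∑ l ∈ F, cf l ≤ 2 := by
      intro F
      exact L2 b cf (fun l => by have := W_pos l; positivity)
        (fun l => by have := W_pos l; positivity) hc0 hrec hbsum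
        (F.sup List.length) F (fun l hl => Finset.le_sup hl)
    have hcfsum : Summable cf :=
      summable_of_sum_le (fun l => by have := W_pos l; positivity) hF
    have hcf2 : ∀ l, cf l ≤ 2 := by
      intro l
      simpa using hF {l}
    refine ⟨2 * q, ?_⟩
    rw [← Equiv.summable_iff (FreeMonoid.ofList : List ℕ ≃ FreeMonoid ℕ)]
    have hfinal : Summable (fun l : List ℕ => ‖(d⁻¹ : ℂ)‖ ^ 2 * (2 * cf l)) :=
      (hcfsum.mul_left 2).mul_left _
    apply Summable.of_nonneg_of_le _ _ hfinal
    · intro l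
      simp only [Function.comp_apply]
      have := ncWeight_pos (FreeMonoid.ofList l)
      positivity
    · intro l
      simp only [Function.comp_apply, FreeMonoid.toList_ofList]
      have hWid : ncWeight (FreeMonoid.ofList l) = W l := rfl
      rw [hWid]
      have hz : (W l) ^ (-((2 * q : ℕ) : ℤ)) = (((W l) ^ q)⁻¹) ^ 2 := by
        rw [zpow_neg, zpow_natCast, pow_mul', inv_pow]
      rw [hz, norm_mul, mul_pow]
      have hcfsq : (‖wInv g l‖ * ((W l) ^ q)⁻¹) ^ 2 ≤ 2 * cf l := by
        have h1 : cf l = ‖wInv g l‖ * ((W l) ^ q)⁻¹ := rfl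
        have h2 : 0 ≤ cf l := by
          rw [h1]; have := W_pos l; positivity
        nlinarith [hcf2 l]
      calc ‖(d⁻¹ : ℂ)‖ ^ 2 * ‖wInv g l‖ ^ 2 * (((W l) ^ q)⁻¹) ^ 2
          = ‖(d⁻¹ : ℂ)‖ ^ 2 * ((‖wInv g l‖ * ((W l) ^ q)⁻¹) ^ 2) := by ring
        _ ≤ ‖(d⁻¹ : ℂ)‖ ^ 2 * (2 * cf l) :=
            mul_le_mul_of_nonneg_left hcfsq (by positivity)
  · -- the Wick product identity
    funext γ
    simp only [wick, wickUnit]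
    set l := FreeMonoid.toList γ with hl
    by_cases hnil : l = []
    · rw [hnil]
      simp only [List.length_nil, zero_add, Finset.sum_range_one, List.take_nil,
        List.drop_nil, FreeMonoid.toList_ofList, wInv_nil, if_pos rfl]
      have : k (FreeMonoid.ofList []) = d := rfl
      rw [this]
      field_simp
      simp
    · rw [Finset.sum_range_succ']
      simp only [FreeMonoid.toList_ofList, List.take_zero, List.drop_zero]
      have hterm : ∀ i ∈ Finset.range l.length,
          k (FreeMonoid.ofList (l.take (i + 1))) * (d⁻¹ * wInv g (l.drop (i + 1)))
          = -(g (l.take (i + 1)) * wInv g (l.drop (i + 1))) := by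
        intro i hi
        rw [Finset.mem_range] at hi
        have htne : l.take (i + 1) ≠ [] := by
          intro hcontra
          have := congrArg List.length hcontra
          rw [List.length_take] at this
          simp only [List.length_nil] at this
          omega
        have hgK : g (l.take (i + 1)) = -(K (l.take (i + 1))) / d := by
          simp only [hg, if_neg htne]
        have hKg : k (FreeMonoid.ofList (l.take (i + 1))) = K (l.take (i + 1)) := rfl
        rw [hKg, hgK]
        field_simp
      rw [Finset.sum_congr rfl hterm]
      rw [Finset.sum_neg_distrib]
      rw [← wInv_ne g l hnil]
      have hK0 : k (FreeMonoid.ofList []) = d := rfl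
      rw [hK0, if_neg hnil]
      field_simp
      ring

end EUH

/-- `E` is the unique unital `ℂ`-algebra homomorphism `(S̃₋₁, +, ⊗) → ℂ`: if `φ` is
additive, `ℂ`-homogeneous and multiplicative for the Wick product on elements of `S̃₋₁`,
and `φ(1) = 1`, then `φ(f) = E[f] = f_1` for every `f ∈ S̃₋₁`. -/
theorem expectation_unique_hom (φ : (FreeMonoid ℕ → ℂ) → ℂ)
    (hadd : ∀ f g, memS f → memS g → φ (fun γ => f γ + g γ) = φ f + φ g)
    (hsmul : ∀ (c : ℂ) f, memS f → φ (fun γ => c * f γ) = c * φ f)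
    (hmul : ∀ f g, memS f → memS g → φ (wick f g) = φ f * φ g)
    (hone : φ wickUnit = 1) :
    ∀ f, memS f → φ f = f 1 := by
  intro f hf
  by_contra hne
  have hUmem : memS (fun γ => (-(φ f)) * wickUnit γ) :=
    EUH.memS_smul _ _ EUH.memS_unit
  have hkS : memS (fun γ => f γ + (-(φ f)) * wickUnit γ) :=
    EUH.memS_add _ _ hf hUmem
  have hφk : φ (fun γ => f γ + (-(φ f)) * wickUnit γ) = 0 := by
    rw [hadd f _ hf hUmem, hsmul _ _ EUH.memS_unit, hone]
    ring
  have hk1 : (fun γ => f γ + (-(φ f)) * wickUnit γ) 1 ≠ 0 := by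
    have hu : wickUnit 1 = 1 := by simp [wickUnit]
    simp only [hu]
    intro hcontra
    apply hne
    linear_combination -1 * hcontra
  obtain ⟨h, hhS, hwick⟩ := EUH.exists_inverse _ hkS hk1
  have hmult := hmul _ h hkS hhS
  rw [hwick, hone, hφk, zero_mul] at hmult
  exact one_ne_zero hmult
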